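/- arXiv:1906.03900 — 3 statements merged into one kernel-verified Lean document; each statement's English description precedes it below -/
import Mathlib

section
/- Let H be a real Hilbert space, (φ_i)_{i∈ℕ} a Hilbert basis of H, and (λ_i)_{i∈ℕ} a nondecreasing sequence of nonnegative real numbers with λ_{n+1} > 0. For every α with 0 ≤ α < 1, every n ∈ ℕ, and every finite family ψ_0, …, ψ_n of elements of H, there exists f ∈ H with ∑_{i∈ℕ} λ_i ⟨f,φ_i⟩² convergent such that ‖f − ∑_{i=0}^{n} ⟨f,ψ_i⟩ ψ_i‖² > α² (∑_{i∈ℕ} λ_i ⟨f,φ_i⟩²) / λ_{n+1}. In other words, the error bound of the truncated eigenbasis expansion cannot be uniformly improved by any factor α < 1 using any other family of n+1 functions. -/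
/-- Optimality of the Laplacian eigenbasis: for any `α < 1`, no family of `n+1`
functions `ψ` can uniformly improve the residual bound of the truncated
eigenbasis expansion by the factor `α`. -/
theorem no_uniform_improvement_of_truncated_expansion
    {H : Type*} [NormedAddCommGroup H] [InnerProductSpace ℝ H] [CompleteSpace H]
    (φ : HilbertBasis ℕ ℝ H) (lam : ℕ → ℝ)
    (hmono : Monotone lam) (hnonneg : ∀ i, 0 ≤ lam i)
    (α : ℝ) (hα0 : 0 ≤ α) (hα1 : α < 1)
    (n : ℕ) (hpos : 0 < lam (n + 1)) (ψ : Fin (n + 1) → H) :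
    ∃ f : H, Summable (fun i => lam i * (inner ℝ f (φ i) : ℝ) ^ 2) ∧
      ‖f - ∑ i, (inner ℝ f (ψ i) : ℝ) • ψ i‖ ^ 2 >
        α ^ 2 * (∑' i, lam i * (inner ℝ f (φ i) : ℝ) ^ 2) / lam (n + 1) := by
  classical
  have horth := φ.orthonormal
  -- linear map sending coefficients to the corresponding vector
  let F : (Fin (n + 2) → ℝ) →ₗ[ℝ] H :=
    { toFun := fun c => ∑ i : Fin (n + 2), c i • φ (i : ℕ)
      map_add' := by intro x y; simp [add_smul, Finset.sum_add_distrib]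
      map_smul' := by intro a x; simp [smul_smul, Finset.smul_sum] }
  let T : (Fin (n + 2) → ℝ) →ₗ[ℝ] (Fin (n + 1) → ℝ) :=
    { toFun := fun c j => (inner ℝ (F c) (ψ j) : ℝ)
      map_add' := by intro x y; funext j; simp [inner_add_left]
      map_smul' := by intro a x; funext j; simp [inner_smul_left] }
  have hnotinj : ¬ Function.Injective T := by
    intro h
    have := LinearMap.finrank_le_finrank_of_injective h
    simp [Module.finrank_pi] at this
  obtain ⟨c, hc0, hcker⟩ : ∃ c, c ≠ 0 ∧ T c = 0 := by
    rw [Function.not_injective_iff] at hnotinj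
    obtain ⟨x, y, hxy, hne⟩ := hnotinj
    exact ⟨x - y, sub_ne_zero.mpr hne, by rw [map_sub, hxy, sub_self]⟩
  set f : H := F c with hf
  -- inner products with the basis
  have hFinner : ∀ k : ℕ, (inner ℝ f (φ k) : ℝ) =
      if h : k < n + 2 then c ⟨k, h⟩ else 0 := by
    intro k
    have : (inner ℝ f (φ k) : ℝ) =
        ∑ i : Fin (n + 2), c i * (inner ℝ (φ (i : ℕ)) (φ k) : ℝ) := by
      simp [hf, F, sum_inner, inner_smul_left]
    rw [this]
    have hite : ∀ i : Fin (n + 2), (inner ℝ (φ (i : ℕ)) (φ k) : ℝ) =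
        if (i : ℕ) = k then 1 else 0 := fun i =>
      orthonormal_iff_ite.mp horth (i : ℕ) k
    simp only [hite]
    by_cases h : k < n + 2
    · rw [dif_pos h]
      rw [Finset.sum_eq_single (⟨k, h⟩ : Fin (n + 2))]
      · simp
      · intro b _ hb
        have : (b : ℕ) ≠ k := by
          intro hbk; apply hb; exact Fin.ext hbk
        simp [this]
      · simp
    · rw [dif_neg h]
      apply Finset.sum_eq_zero
      intro i _
      have hik : (i : ℕ) ≠ k := by have := i.isLt; omega
      simp [hik]
  have hzero : ∀ k : ℕ, n + 2 ≤ k → (inner ℝ f (φ k) : ℝ) = 0 := by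
    intro k hk; rw [hFinner k, dif_neg (by omega)]
  -- summability and tsum
  have hsupp : ∀ k ∉ Finset.range (n + 2),
      lam k * (inner ℝ f (φ k) : ℝ) ^ 2 = 0 := by
    intro k hk
    rw [hzero k (by simpa using hk)]; ring
  have hsum : Summable (fun i => lam i * (inner ℝ f (φ i) : ℝ) ^ 2) :=
    summable_of_ne_finset_zero hsupp
  have htsum : (∑' i, lam i * (inner ℝ f (φ i) : ℝ) ^ 2) =
      ∑ i ∈ Finset.range (n + 2), lam i * (inner ℝ f (φ i) : ℝ) ^ 2 :=
    tsum_eq_sum hsupp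
  -- residual equals f
  have hker : ∀ j : Fin (n + 1), (inner ℝ f (ψ j) : ℝ) = 0 := by
    intro j; exact congrFun hcker j
  have hres : f - ∑ i, (inner ℝ f (ψ i) : ℝ) • ψ i = f := by
    simp [hker]
  -- f ≠ 0
  have hfne : f ≠ 0 := by
    intro h0
    apply hc0
    have hli : LinearIndependent ℝ (fun i : Fin (n + 2) => φ (i : ℕ)) :=
      horth.linearIndependent.comp _ Fin.val_injective
    have := Fintype.linearIndependent_iff.mp hli c (by simpa [hf, F] using h0)
    funext i; exact this i
  have hN : (0:ℝ) < ‖f‖ ^ 2 := by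
    have := norm_pos_iff.mpr hfne; positivity
  -- the energy bound
  have hbound : (∑' i, lam i * (inner ℝ f (φ i) : ℝ) ^ 2) ≤ lam (n + 1) * ‖f‖ ^ 2 := by
    rw [htsum]
    have h1 : ∑ i ∈ Finset.range (n + 2), lam i * (inner ℝ f (φ i) : ℝ) ^ 2 ≤
        ∑ i ∈ Finset.range (n + 2), lam (n + 1) * (inner ℝ f (φ i) : ℝ) ^ 2 := by
      apply Finset.sum_le_sum
      intro i hi
      have hi' : i ≤ n + 1 := by simpa using Nat.lt_succ_iff.mp (Finset.mem_range.mp hi)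
      exact mul_le_mul_of_nonneg_right (hmono hi') (sq_nonneg _)
    have h2 : ∑ i ∈ Finset.range (n + 2), (inner ℝ f (φ i) : ℝ) ^ 2 ≤ ‖f‖ ^ 2 := by
      have := horth.sum_inner_products_le (s := Finset.range (n + 2)) f
      calc ∑ i ∈ Finset.range (n + 2), (inner ℝ f (φ i) : ℝ) ^ 2
          = ∑ i ∈ Finset.range (n + 2), ‖(inner ℝ (φ i) f : ℝ)‖ ^ 2 := by
            apply Finset.sum_congr rfl; intro i _
            rw [real_inner_comm, Real.norm_eq_abs, sq_abs]
        _ ≤ ‖f‖ ^ 2 := this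
    calc ∑ i ∈ Finset.range (n + 2), lam i * (inner ℝ f (φ i) : ℝ) ^ 2
        ≤ ∑ i ∈ Finset.range (n + 2), lam (n + 1) * (inner ℝ f (φ i) : ℝ) ^ 2 := h1
      _ = lam (n + 1) * ∑ i ∈ Finset.range (n + 2), (inner ℝ f (φ i) : ℝ) ^ 2 := by
          rw [Finset.mul_sum]
      _ ≤ lam (n + 1) * ‖f‖ ^ 2 := by
          exact mul_le_mul_of_nonneg_left h2 (le_of_lt hpos)
  refine ⟨f, hsum, ?_⟩
  rw [hres, gt_iff_lt, div_lt_iff₀ hpos]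
  have hα2 : α ^ 2 < 1 := by nlinarith
  nlinarith [mul_le_mul_of_nonneg_left hbound (sq_nonneg α), mul_pos hpos hN,
    mul_lt_mul_of_pos_right hα2 (mul_pos hpos hN)]
end

section
/- Let H be a real Hilbert space, Φ : H → H a self-adjoint continuous linear operator, and ℰ : H → H a continuous linear operator. Suppose φ : ℝ → H and μ : ℝ → ℝ are differentiable at 0, ‖φ(0)‖ = 1, and for all δ ∈ ℝ the perturbed eigenvalue equation Φ(φ(δ)) + δ·ℰ(φ(δ)) = μ(δ)·φ(δ) holds. Then |μ′(0)| ≤ ‖ℰ‖, where ‖ℰ‖ is the operator norm of ℰ; i.e., the computation of a simple eigenvalue of the spectral operator is numerically stable under perturbations of the operator. -/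
/-- Stability of a simple eigenvalue of a self-adjoint operator under linear
perturbations: the derivative of the perturbed eigenvalue is bounded by the
operator norm of the perturbation, `|μ′(0)| ≤ ‖ℰ‖`. -/
theorem eigenvalue_perturbation_stability
    {H : Type*} [NormedAddCommGroup H] [InnerProductSpace ℝ H] [CompleteSpace H]
    (Φ E : H →L[ℝ] H)
    (hΦ : ∀ f g : H, (inner ℝ (Φ f) g : ℝ) = inner ℝ f (Φ g))
    (φ : ℝ → H) (μ : ℝ → ℝ)
    (hφ : DifferentiableAt ℝ φ 0) (hμ : DifferentiableAt ℝ μ 0)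
    (hnorm : ‖φ 0‖ = 1)
    (heq : ∀ δ : ℝ, Φ (φ δ) + δ • E (φ δ) = μ δ • φ δ) :
    |deriv μ 0| ≤ ‖E‖ := by
  set φ' := deriv φ 0 with hφ'def
  set μ' := deriv μ 0 with hμ'def
  have hφ0 : Φ (φ 0) = μ 0 • φ 0 := by simpa using heq 0
  have hdφ : HasDerivAt φ φ' 0 := hφ.hasDerivAt
  have hdμ : HasDerivAt μ μ' 0 := hμ.hasDerivAt
  have hΦφ : HasDerivAt (fun δ => Φ (φ δ)) (Φ φ') 0 :=
    (Φ.hasFDerivAt.comp_hasDerivAt 0 hdφ)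
  have hEφ : HasDerivAt (fun δ => E (φ δ)) (E φ') 0 :=
    (E.hasFDerivAt.comp_hasDerivAt 0 hdφ)
  have hsmul : HasDerivAt (fun δ : ℝ => δ • E (φ δ)) ((0:ℝ) • E φ' + (1:ℝ) • E (φ 0)) 0 := by
    exact ((hasDerivAt_id (0:ℝ)).smul hEφ).congr_deriv (by simp)
  have hsum : HasDerivAt (fun δ => Φ (φ δ) + δ • E (φ δ)) (Φ φ' + E (φ 0)) 0 := by
    exact hΦφ.add hsmul |>.congr_deriv (by simp)
  have hL : HasDerivAt (fun δ => (inner ℝ (Φ (φ δ) + δ • E (φ δ)) (φ 0) : ℝ))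
      ((inner ℝ (Φ (φ 0) + (0:ℝ) • E (φ 0)) (0:H) : ℝ) + inner ℝ (Φ φ' + E (φ 0)) (φ 0)) 0 :=
    hsum.inner (𝕜 := ℝ) (hasDerivAt_const 0 (φ 0))
  have hR : HasDerivAt (fun δ => μ δ * (inner ℝ (φ δ) (φ 0) : ℝ))
      (μ' * inner ℝ (φ 0) (φ 0) + μ 0 * ((inner ℝ (φ 0) (0:H) : ℝ) + inner ℝ φ' (φ 0))) 0 :=
    hdμ.mul (hdφ.inner (𝕜 := ℝ) (hasDerivAt_const 0 (φ 0)))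
  have hfun : (fun δ => (inner ℝ (Φ (φ δ) + δ • E (φ δ)) (φ 0) : ℝ))
      = fun δ => μ δ * (inner ℝ (φ δ) (φ 0) : ℝ) := by
    funext δ
    rw [heq δ, real_inner_smul_left]
  rw [hfun] at hL
  have huniq := hL.unique hR
  simp only [inner_zero_right, mul_zero, zero_add, zero_smul, add_zero, mul_add] at huniq
  have h1 : (inner ℝ (φ 0) (φ 0) : ℝ) = 1 := by
    rw [real_inner_self_eq_norm_sq, hnorm]; norm_num
  have h2 : (inner ℝ (Φ φ') (φ 0) : ℝ) = μ 0 * inner ℝ φ' (φ 0) := by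
    rw [hΦ, hφ0, real_inner_smul_right]
  rw [inner_add_left, h2, h1, mul_one] at huniq
  have hμ' : μ' = inner ℝ (E (φ 0)) (φ 0) := by linarith
  rw [hμ']
  calc |(inner ℝ (E (φ 0)) (φ 0) : ℝ)| ≤ ‖E (φ 0)‖ * ‖φ 0‖ := abs_real_inner_le_norm _ _
    _ ≤ ‖E‖ * ‖φ 0‖ * ‖φ 0‖ := by
        have := E.le_opNorm (φ 0)
        nlinarith [norm_nonneg (φ 0)]
    _ = ‖E‖ := by rw [hnorm]; ring
end

section
/- Let B be an n×n real symmetric positive-definite matrix and X an n×n real matrix with Xᵀ B X = I, whose first column is the constant vector 𝟙 = (1,…,1)ᵀ. Let λ : Fin n → ℝ with λ_1 = 0 and λ_i ≠ 0 for all i ≥ 2. Define L̃ := X Λ Xᵀ B with Λ = diagonal(λ_1,…,λ_n), and its pseudo-inverse L̃† := X Λ† Xᵀ B with Λ† = diagonal(0, λ_2⁻¹,…,λ_n⁻¹). Then for every f ∈ ℝⁿ, L̃ (L̃† f) = f − (𝟙ᵀ B f) · 𝟙; i.e., g₁ = L̃† f is a solution of the Laplace equation L̃ g₁ = f̃, where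 f̃ is f minus its B-weighted mean. -/
open Matrix

/-- Spectrum-free evaluation of the Laplacian pseudo-inverse: if the first
column of `X` is the constant vector `𝟙` (eigenvector of the eigenvalue
`λ_1 = 0`), then `L̃ (L̃† f) = f − (𝟙ᵀ B f) 𝟙`, i.e. `L̃† f` solves the Laplace
equation with right-hand side `f` minus its `B`-weighted mean. -/
theorem laplacian_pseudo_inverse_equation
    {n : ℕ} [NeZero n] (B X : Matrix (Fin n) (Fin n) ℝ)
    (hB : B.PosDef) (hBsymm : B.IsSymm)
    (hX : Xᵀ * B * X = 1)
    (hcol : ∀ i, X i 0 = 1)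
    (lam : Fin n → ℝ) (hlam0 : lam 0 = 0) (hlam : ∀ l : Fin n, l ≠ 0 → lam l ≠ 0)
    (f : Fin n → ℝ) :
    (X * Matrix.diagonal lam * Xᵀ * B).mulVec
        ((X * Matrix.diagonal (fun l => if l = 0 then 0 else (lam l)⁻¹) * Xᵀ * B).mulVec f) =
      f - ((fun _ => (1 : ℝ)) ⬝ᵥ B.mulVec f) • (fun _ => (1 : ℝ)) := by
  have hXinv : X * (Xᵀ * B) = 1 := by
    have h1 : (Xᵀ * B) * X = 1 := by rw [← hX]
    exact mul_eq_one_comm.mpr h1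
  have hd : Matrix.diagonal lam * Matrix.diagonal (fun l => if l = 0 then 0 else (lam l)⁻¹)
      = Matrix.diagonal (fun l : Fin n => if l = 0 then (0:ℝ) else 1) := by
    rw [Matrix.diagonal_mul_diagonal]
    apply congrArg Matrix.diagonal; funext l
    by_cases h : l = 0
    · simp [h, hlam0]
    · simp [h, mul_inv_cancel₀ (hlam l h)]
  have key : (X * Matrix.diagonal lam * Xᵀ * B) *
      (X * Matrix.diagonal (fun l => if l = 0 then 0 else (lam l)⁻¹) * Xᵀ * B)
      = X * Matrix.diagonal (fun l : Fin n => if l = 0 then (0:ℝ) else 1) * Xᵀ * B := by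
    have h1 : (X * Matrix.diagonal lam * Xᵀ * B) *
        (X * Matrix.diagonal (fun l => if l = 0 then 0 else (lam l)⁻¹) * Xᵀ * B)
        = X * (Matrix.diagonal lam * (Xᵀ * B * X) *
            Matrix.diagonal (fun l => if l = 0 then 0 else (lam l)⁻¹)) * (Xᵀ * B) := by
      simp only [Matrix.mul_assoc]
    rw [h1, hX, Matrix.mul_one, hd]
    simp only [Matrix.mul_assoc]
  rw [Matrix.mulVec_mulVec, key]
  have hdiag : Matrix.diagonal (fun l : Fin n => if l = 0 then (0:ℝ) else 1)
      = 1 - Matrix.diagonal (fun l : Fin n => if l = 0 then (1:ℝ) else 0) := by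
    ext i j
    by_cases h : i = j
    · subst h; by_cases h0 : i = 0 <;> simp [Matrix.diagonal_apply, Matrix.one_apply, h0]
    · simp [Matrix.diagonal_apply, Matrix.one_apply, h]
  rw [hdiag, Matrix.mul_sub, Matrix.mul_one, Matrix.sub_mul, Matrix.sub_mul,
    Matrix.sub_mulVec, Matrix.mul_assoc X Xᵀ B, hXinv, Matrix.one_mulVec]
  congr 1
  have hJ : X * Matrix.diagonal (fun l : Fin n => if l = 0 then (1:ℝ) else 0) * Xᵀ
      = Matrix.of (fun _ _ => (1:ℝ)) := by
    ext i j
    simp [Matrix.mul_apply, Matrix.diagonal_apply, Matrix.transpose_apply, ite_and,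
      Finset.sum_ite_eq', hcol]
  rw [hJ]
  ext i
  simp [Matrix.mulVec, dotProduct, Matrix.mul_apply, Finset.sum_mul, smul_eq_mul,
    mul_comm]
  rw [Finset.sum_comm]
  simp [Finset.mul_sum, mul_comm]
end
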